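/- Let T ∈ B(H) be a norm limit of complex symmetric operators, with conjugations C_n satisfying C_n T* C_n → T in norm. Suppose x is a shift-cyclic vector for T (the closed span of {T^k x, (T*)^k x : k ≥ 0} is all of H) and that the sequence (C_n x) converges in H. Then T is a complex symmetric operator. -/
import Mathlib


open Filter Topology ContinuousLinearMap

def IsConjugation {H : Type*} [NormedAddCommGroup H] [InnerProductSpace ℂ H]
    (C : H → H) : Prop :=
  (∀ x y, C (x + y) = C x + C y) ∧
  (∀ (a : ℂ) (x : H), C (a • x) = (starRingEnd ℂ a) • C x) ∧
  (∀ x, ‖C x‖ = ‖x‖) ∧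
  (∀ x, C (C x) = x)

def IsCSO {H : Type*} [NormedAddCommGroup H] [InnerProductSpace ℂ H]
    [CompleteSpace H] (T : H →L[ℂ] H) : Prop :=
  ∃ C : H → H, IsConjugation C ∧ ∀ x, T x = C (adjoint T (C x))

/-- `x` is shift-cyclic for `T` if `span {T^k x, (T*)^k x : k ≥ 0}` is dense. -/
def ShiftCyclic {H : Type*} [NormedAddCommGroup H] [InnerProductSpace ℂ H]
    [CompleteSpace H] (T : H →L[ℂ] H) (x : H) : Prop :=
  Dense (Submodule.span ℂ
    ({y : H | ∃ k : ℕ, y = (T ^ k) x ∨ y = ((adjoint T) ^ k) x}) : Set H)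

set_option maxHeartbeats 2000000 in
/-- If `Cₙ T* Cₙ → T` in operator norm, `x` is shift-cyclic for `T`, and
`(Cₙ x)` converges, then `T` is complex symmetric. -/
theorem CSO_of_shiftCyclic_convergence {H : Type*} [NormedAddCommGroup H]
    [InnerProductSpace ℂ H] [CompleteSpace H]
    (T : H →L[ℂ] H) (Cseq : ℕ → H → H)
    (hC : ∀ n, IsConjugation (Cseq n))
    (hconv : ∀ ε > (0:ℝ), ∃ N, ∀ n ≥ N, ∀ y : H,
      ‖T y - Cseq n (adjoint T (Cseq n y))‖ ≤ ε * ‖y‖)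
    (x : H) (hx : ShiftCyclic T x)
    (hCx : ∃ y : H, Tendsto (fun n => Cseq n x) atTop (𝓝 y)) :
    IsCSO T := by
  classical
  -- basic facts about each Cseq n
  have hadd : ∀ n (u v : H), Cseq n (u + v) = Cseq n u + Cseq n v := fun n => (hC n).1
  have hsmul : ∀ n (a : ℂ) (u : H), Cseq n (a • u) = (starRingEnd ℂ a) • Cseq n u :=
    fun n => (hC n).2.1
  have hnorm : ∀ n (u : H), ‖Cseq n u‖ = ‖u‖ := fun n => (hC n).2.2.1
  have hinv : ∀ n (u : H), Cseq n (Cseq n u) = u := fun n => (hC n).2.2.2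
  have h0 : ∀ n, Cseq n 0 = 0 := by
    intro n
    simpa using hsmul n 0 0
  have hneg : ∀ n (v : H), Cseq n (-v) = -Cseq n v := by
    intro n v
    simpa using hsmul n (-1) v
  have hsub : ∀ n (u v : H), Cseq n (u - v) = Cseq n u - Cseq n v := by
    intro n u v
    rw [sub_eq_add_neg, hadd, hneg, sub_eq_add_neg]
  have hdist : ∀ n (u v : H), ‖Cseq n u - Cseq n v‖ = ‖u - v‖ := by
    intro n u v
    rw [← hsub, hnorm]
  -- a convenient convergence-to-zero criterion
  have tend0 : ∀ f : ℕ → ℝ, (∀ n, 0 ≤ f n) →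
      (∀ ε > (0:ℝ), ∃ N, ∀ n ≥ N, f n ≤ ε) → Tendsto f atTop (𝓝 0) := by
    intro f hf hfe
    rw [Metric.tendsto_atTop]
    intro ε hε
    obtain ⟨N, hN⟩ := hfe (ε / 2) (by positivity)
    refine ⟨N, fun n hn => ?_⟩
    have := hN n hn
    have h2 := hf n
    rw [Real.dist_eq, abs_of_nonneg (by simpa using h2)]
    simp only [sub_zero]
    linarith
  -- weighted version of hconv
  have hconvz : ∀ z : H, ∀ ε > (0:ℝ), ∃ N, ∀ n ≥ N,
      ‖T z - Cseq n (adjoint T (Cseq n z))‖ ≤ ε := by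
    intro z ε hε
    obtain ⟨N, hN⟩ := hconv (ε / (‖z‖ + 1)) (by positivity)
    refine ⟨N, fun n hn => ?_⟩
    have h1 := hN n hn z
    have h2 : ε / (‖z‖ + 1) * ‖z‖ ≤ ε := by
      rw [div_mul_eq_mul_div, div_le_iff₀ (by positivity)]
      nlinarith [norm_nonneg z]
    linarith
  have keyT : ∀ z : H,
      Tendsto (fun n => ‖T z - Cseq n (adjoint T (Cseq n z))‖) atTop (𝓝 0) := by
    intro z
    exact tend0 _ (fun n => norm_nonneg _) (hconvz z)
  -- ‖Cₙ(T z) - T* (Cₙ z)‖ → 0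
  have keyA : ∀ z : H,
      Tendsto (fun n => ‖Cseq n (T z) - adjoint T (Cseq n z)‖) atTop (𝓝 0) := by
    intro z
    refine tend0 _ (fun n => norm_nonneg _) ?_
    intro ε hε
    obtain ⟨N, hN⟩ := hconvz z ε hε
    refine ⟨N, fun n hn => ?_⟩
    have h1 := hN n hn
    calc ‖Cseq n (T z) - adjoint T (Cseq n z)‖
        = ‖Cseq n (T z) - Cseq n (Cseq n (adjoint T (Cseq n z)))‖ := by rw [hinv]
      _ = ‖T z - Cseq n (adjoint T (Cseq n z))‖ := hdist n _ _
      _ ≤ ε := h1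
  -- ‖Cₙ(T* z) - T (Cₙ z)‖ → 0
  have keyB : ∀ z : H,
      Tendsto (fun n => ‖Cseq n (adjoint T z) - T (Cseq n z)‖) atTop (𝓝 0) := by
    intro z
    refine tend0 _ (fun n => norm_nonneg _) ?_
    intro ε hε
    obtain ⟨N, hN⟩ := hconv (ε / (‖z‖ + 1)) (by positivity)
    refine ⟨N, fun n hn => ?_⟩
    have h1 := hN n hn (Cseq n z)
    rw [hinv] at h1
    have h2 : ‖Cseq n z‖ = ‖z‖ := hnorm n z
    rw [h2] at h1
    have h3 : ε / (‖z‖ + 1) * ‖z‖ ≤ ε := by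
      rw [div_mul_eq_mul_div, div_le_iff₀ (by positivity)]
      nlinarith [norm_nonneg z]
    calc ‖Cseq n (adjoint T z) - T (Cseq n z)‖
        = ‖T (Cseq n z) - Cseq n (adjoint T z)‖ := norm_sub_rev _ _
      _ ≤ ε := le_trans h1 h3
  -- step lemmas
  have stepT : ∀ z w : H, Tendsto (fun n => Cseq n z) atTop (𝓝 w) →
      Tendsto (fun n => Cseq n (T z)) atTop (𝓝 (adjoint T w)) := by
    intro z w hzw
    rw [tendsto_iff_norm_sub_tendsto_zero]
    have h2 : Tendsto (fun n => ‖adjoint T (Cseq n z) - adjoint T w‖) atTop (𝓝 0) := by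
      have := ((adjoint T).continuous.tendsto w).comp hzw
      exact tendsto_iff_norm_sub_tendsto_zero.mp this
    have hb : Tendsto (fun n => ‖Cseq n (T z) - adjoint T (Cseq n z)‖
        + ‖adjoint T (Cseq n z) - adjoint T w‖) atTop (𝓝 0) := by
      simpa using (keyA z).add h2
    refine squeeze_zero (fun n => norm_nonneg _) (fun n => ?_) hb
    calc ‖Cseq n (T z) - adjoint T w‖
        = ‖(Cseq n (T z) - adjoint T (Cseq n z)) + (adjoint T (Cseq n z) - adjoint T w)‖ := by
          rw [sub_add_sub_cancel]
      _ ≤ _ := norm_add_le _ _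
  have stepA : ∀ z w : H, Tendsto (fun n => Cseq n z) atTop (𝓝 w) →
      Tendsto (fun n => Cseq n (adjoint T z)) atTop (𝓝 (T w)) := by
    intro z w hzw
    rw [tendsto_iff_norm_sub_tendsto_zero]
    have h2 : Tendsto (fun n => ‖T (Cseq n z) - T w‖) atTop (𝓝 0) := by
      have := (T.continuous.tendsto w).comp hzw
      exact tendsto_iff_norm_sub_tendsto_zero.mp this
    have hb : Tendsto (fun n => ‖Cseq n (adjoint T z) - T (Cseq n z)‖
        + ‖T (Cseq n z) - T w‖) atTop (𝓝 0) := by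
      simpa using (keyB z).add h2
    refine squeeze_zero (fun n => norm_nonneg _) (fun n => ?_) hb
    calc ‖Cseq n (adjoint T z) - T w‖
        = ‖(Cseq n (adjoint T z) - T (Cseq n z)) + (T (Cseq n z) - T w)‖ := by
          rw [sub_add_sub_cancel]
      _ ≤ _ := norm_add_le _ _
  -- the set of points where (Cseq n z) converges
  set P : H → Prop := fun z => ∃ w, Tendsto (fun n => Cseq n z) atTop (𝓝 w) with hP
  obtain ⟨y, hy⟩ := hCx
  -- generators
  have hgen : ∀ k : ℕ, (Tendsto (fun n => Cseq n ((T ^ k) x)) atTop (𝓝 (((adjoint T) ^ k) y)))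
      ∧ (Tendsto (fun n => Cseq n (((adjoint T) ^ k) x)) atTop (𝓝 ((T ^ k) y))) := by
    intro k
    induction k with
    | zero => refine ⟨?_, ?_⟩ <;> simpa using hy
    | succ k ih =>
      constructor
      · have := stepT _ _ ih.1
        have e1 : ∀ n, Cseq n ((T ^ (k+1)) x) = Cseq n (T ((T ^ k) x)) := by
          intro n; congr 1
          rw [pow_succ']
          simp [ContinuousLinearMap.mul_apply]
        have e2 : ((adjoint T) ^ (k+1)) y = adjoint T (((adjoint T) ^ k) y) := by
          rw [pow_succ']
          simp [ContinuousLinearMap.mul_apply]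
        rw [e2]
        simpa only [e1] using this
      · have := stepA _ _ ih.2
        have e1 : ∀ n, Cseq n (((adjoint T) ^ (k+1)) x) = Cseq n (adjoint T (((adjoint T) ^ k) x)) := by
          intro n; congr 1
          rw [pow_succ']
          simp [ContinuousLinearMap.mul_apply]
        have e2 : (T ^ (k+1)) y = T ((T ^ k) y) := by
          rw [pow_succ']
          simp [ContinuousLinearMap.mul_apply]
        rw [e2]
        simpa only [e1] using this
  -- P holds on the span
  have hspan : ∀ z ∈ Submodule.span ℂ
      ({v : H | ∃ k : ℕ, v = (T ^ k) x ∨ v = ((adjoint T) ^ k) x}), P z := by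
    intro z hz
    induction hz using Submodule.span_induction with
    | mem v hv =>
      obtain ⟨k, hk | hk⟩ := hv
      · exact ⟨_, hk ▸ (hgen k).1⟩
      · exact ⟨_, hk ▸ (hgen k).2⟩
    | zero =>
      refine ⟨0, ?_⟩
      simp only [h0]
      exact tendsto_const_nhds
    | add u v hu hv ihu ihv =>
      obtain ⟨wu, hwu⟩ := ihu
      obtain ⟨wv, hwv⟩ := ihv
      refine ⟨wu + wv, ?_⟩
      simp only [hadd]
      exact hwu.add hwv
    | smul a u hu ihu =>
      obtain ⟨w, hw⟩ := ihu
      refine ⟨(starRingEnd ℂ a) • w, ?_⟩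
      simp only [hsmul]
      exact hw.const_smul _
  -- P holds everywhere, by density
  have hall : ∀ z : H, P z := by
    intro z
    have hzc : z ∈ closure (Submodule.span ℂ
        ({v : H | ∃ k : ℕ, v = (T ^ k) x ∨ v = ((adjoint T) ^ k) x}) : Set H) := by
      rw [hx.closure_eq]; trivial
    have hcs : CauchySeq (fun n => Cseq n z) := by
      rw [Metric.cauchySeq_iff]
      intro ε hε
      obtain ⟨w, hwmem, hwd⟩ := Metric.mem_closure_iff.mp hzc (ε / 4) (by positivity)
      obtain ⟨lw, hlw⟩ := hspan w hwmem
      have hwc : CauchySeq (fun n => Cseq n w) := hlw.cauchySeq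
      obtain ⟨N, hN⟩ := Metric.cauchySeq_iff.mp hwc (ε / 4) (by positivity)
      refine ⟨N, fun m hm n hn => ?_⟩
      have d1 : dist (Cseq m z) (Cseq m w) = dist z w := by
        rw [dist_eq_norm, dist_eq_norm, hdist]
      have d2 : dist (Cseq n w) (Cseq n z) = dist w z := by
        rw [dist_eq_norm, dist_eq_norm, hdist]
      have := hN m hm n hn
      calc dist (Cseq m z) (Cseq n z)
          ≤ dist (Cseq m z) (Cseq m w) + dist (Cseq m w) (Cseq n w)
            + dist (Cseq n w) (Cseq n z) := dist_triangle4 _ _ _ _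
        _ < ε / 4 + ε / 4 + ε / 4 := by
            rw [d1, d2, dist_comm w z]
            have := hN m hm n hn
            linarith [hwd, this]
        _ < ε := by linarith
    exact cauchySeq_tendsto_of_complete hcs
  -- define the limit conjugation
  choose C hlim using hall
  refine ⟨C, ⟨?_, ?_, ?_, ?_⟩, ?_⟩
  · -- additive
    intro u v
    refine tendsto_nhds_unique (hlim (u + v)) ?_
    have := (hlim u).add (hlim v)
    simpa only [hadd] using this
  · -- conjugate-homogeneous
    intro a u
    refine tendsto_nhds_unique (hlim (a • u)) ?_
    have := (hlim u).const_smul (starRingEnd ℂ a)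
    simpa only [hsmul] using this
  · -- isometric
    intro u
    have h1 : Tendsto (fun n => ‖Cseq n u‖) atTop (𝓝 ‖C u‖) :=
      (continuous_norm.tendsto _).comp (hlim u)
    have h2 : Tendsto (fun n => ‖Cseq n u‖) atTop (𝓝 ‖u‖) := by
      simp only [hnorm]; exact tendsto_const_nhds
    exact tendsto_nhds_unique h1 h2
  · -- involutive
    intro u
    refine tendsto_nhds_unique (hlim (C u)) ?_
    rw [tendsto_iff_norm_sub_tendsto_zero]
    have hb : Tendsto (fun n => ‖C u - Cseq n u‖) atTop (𝓝 0) := by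
      have := tendsto_iff_norm_sub_tendsto_zero.mp (hlim u)
      simpa [norm_sub_rev] using this
    refine squeeze_zero (fun n => norm_nonneg _) (fun n => ?_) hb
    calc ‖Cseq n (C u) - u‖ = ‖Cseq n (C u) - Cseq n (Cseq n u)‖ := by rw [hinv]
      _ = ‖C u - Cseq n u‖ := hdist n _ _
      _ ≤ ‖C u - Cseq n u‖ := le_rfl
  · -- T = C T* C
    intro z
    have h1 : Tendsto (fun n => Cseq n (adjoint T (Cseq n z))) atTop (𝓝 (T z)) := by
      rw [tendsto_iff_norm_sub_tendsto_zero]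
      have he : (fun n => ‖Cseq n (adjoint T (Cseq n z)) - T z‖)
          = fun n => ‖T z - Cseq n (adjoint T (Cseq n z))‖ :=
        funext fun n => norm_sub_rev _ _
      rw [he]
      exact keyT z
    have h2 : Tendsto (fun n => Cseq n (adjoint T (Cseq n z))) atTop
        (𝓝 (C (adjoint T (C z)))) := by
      rw [tendsto_iff_norm_sub_tendsto_zero]
      have ha : Tendsto (fun n => ‖adjoint T (Cseq n z) - adjoint T (C z)‖) atTop (𝓝 0) := by
        have := ((adjoint T).continuous.tendsto (C z)).comp (hlim z)
        exact tendsto_iff_norm_sub_tendsto_zero.mp this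
      have hb : Tendsto (fun n => ‖Cseq n (adjoint T (C z)) - C (adjoint T (C z))‖)
          atTop (𝓝 0) := tendsto_iff_norm_sub_tendsto_zero.mp (hlim _)
      have hsum : Tendsto (fun n => ‖adjoint T (Cseq n z) - adjoint T (C z)‖
          + ‖Cseq n (adjoint T (C z)) - C (adjoint T (C z))‖) atTop (𝓝 0) := by
        simpa using ha.add hb
      refine squeeze_zero (fun n => norm_nonneg _) (fun n => ?_) hsum
      calc ‖Cseq n (adjoint T (Cseq n z)) - C (adjoint T (C z))‖
          = ‖(Cseq n (adjoint T (Cseq n z)) - Cseq n (adjoint T (C z)))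
            + (Cseq n (adjoint T (C z)) - C (adjoint T (C z)))‖ := by rw [sub_add_sub_cancel]
        _ ≤ ‖Cseq n (adjoint T (Cseq n z)) - Cseq n (adjoint T (C z))‖
            + ‖Cseq n (adjoint T (C z)) - C (adjoint T (C z))‖ := norm_add_le _ _
        _ = ‖adjoint T (Cseq n z) - adjoint T (C z)‖
            + ‖Cseq n (adjoint T (C z)) - C (adjoint T (C z))‖ := by rw [hdist]
    exact tendsto_nhds_unique h1 h2
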